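/- If the n-element column-index set 𝒱 contains some edge index e ∈ E, then for every matrix A with rows indexed by 𝒱 and columns indexed by (V × {1,2,3}) ⊔ E one has ‖M(G) − SA‖ > √(m t² + 4 n t⁶ + m t¹⁰). -/

import Mathlib

open Matrix

/-- The Frobenius norm of a real matrix: the square root of the sum of squares of entries. -/
noncomputable def frob {α β : Type*} [Fintype α] [Fintype β] (X : Matrix α β ℝ) : ℝ :=
  Real.sqrt (∑ i, ∑ j, X i j ^ 2)

/-- The matrix `M(G)` of the reduction: rows indexed by `V ⊕ {1,2,3} ⊕ {ε}`,
columns indexed by `(V × {1,2,3}) ⊕ E`. -/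
def MG {V : Type*} [Fintype V] [DecidableEq V] (G : SimpleGraph V) [DecidableRel G.Adj]
    (t : ℝ) : Matrix (V ⊕ Fin 3 ⊕ Unit) ((V × Fin 3) ⊕ G.edgeSet) ℝ :=
  fun r c =>
    match r, c with
    | Sum.inl u, Sum.inl (v, _) => if u = v then (1 : ℝ) else 0
    | Sum.inl u, Sum.inr e => if u ∈ (e : Sym2 V) then t ^ 2 else 0
    | Sum.inr (Sum.inl i), Sum.inl (_, j) => if i = j then t ^ 3 else 0
    | Sum.inr (Sum.inl _), Sum.inr _ => t ^ 5
    | Sum.inr (Sum.inr _), Sum.inl _ => 0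
    | Sum.inr (Sum.inr _), Sum.inr _ => t

set_option maxHeartbeats 1000000 in
/-- If the `n`-element column-index set `𝒱` contains some edge index `e ∈ E`, then for every
`A` one has `‖M(G) - S A‖ > √(m t² + 4 n t⁶ + m t¹⁰)`. -/
theorem edge_column_exceeds_threshold
    {V : Type*} [Fintype V] [DecidableEq V] (G : SimpleGraph V) [DecidableRel G.Adj]
    (n m : ℕ) (hn : n = Fintype.card V) (hm : m = G.edgeFinset.card)
    (hn1 : 1 ≤ n) (hm1 : 1 ≤ m)
    (t : ℝ) (ht : t = 1 / (4 * (m + n) ^ 3))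
    (𝒱 : Finset ((V × Fin 3) ⊕ G.edgeSet)) (hcard : 𝒱.card = n)
    (he : ∃ e : G.edgeSet, Sum.inr e ∈ 𝒱)
    (A : Matrix 𝒱 ((V × Fin 3) ⊕ G.edgeSet) ℝ) :
    frob (MG G t - Matrix.of (fun r (c : 𝒱) => MG G t r c.val) * A) >
      Real.sqrt (m * t ^ 2 + 4 * n * t ^ 6 + m * t ^ 10) := by
  classical
  obtain ⟨e₀, he₀⟩ := he
  -- numeric facts about t
  have hm1' : (1:ℝ) ≤ (m:ℝ) := by exact_mod_cast hm1
  have hn1' : (1:ℝ) ≤ (n:ℝ) := by exact_mod_cast hn1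
  have hs2 : (2:ℝ) ≤ (m:ℝ) + (n:ℝ) := by linarith
  have ht' : t = 1 / (4 * ((m:ℝ) + (n:ℝ)) ^ 3) := by push_cast at ht; exact ht
  have htpos : 0 < t := by
    rw [ht']; positivity
  have h8 : (8:ℝ) ≤ ((m:ℝ)+(n:ℝ))^3 := by
    have hp := pow_le_pow_left₀ (by norm_num : (0:ℝ) ≤ 2) hs2 3
    norm_num at hp
    linarith
  have h32 : (32:ℝ) ≤ 4 * ((m:ℝ)+(n:ℝ))^3 := by linarith
  have ht32 : t ≤ 1/32 := by
    rw [ht']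
    exact one_div_le_one_div_of_le (by norm_num) h32
  have ht1 : t ≤ 1 := le_trans ht32 (by norm_num)
  have hst : ((m:ℝ)+(n:ℝ)) * t ≤ 1/16 := by
    have hsne : ((m:ℝ)+(n:ℝ)) ≠ 0 := by linarith
    have heq : ((m:ℝ)+(n:ℝ)) * t = 1 / (4*((m:ℝ)+(n:ℝ))^2) := by
      rw [ht']; field_simp
    rw [heq]
    exact one_div_le_one_div_of_le (by norm_num) (by nlinarith)
  -- the threshold is small
  have hstt : ((m:ℝ)+(n:ℝ)) * t * t ≤ (1/16) * t := mul_le_mul_of_nonneg_right hst htpos.le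
  have h16t : (1/16:ℝ) * t ≤ 1/512 := by nlinarith
  have hmt2 : (m:ℝ) * t^2 ≤ 1/512 := by
    nlinarith [mul_nonneg (mul_nonneg (by linarith : (0:ℝ) ≤ (n:ℝ)) htpos.le) htpos.le]
  have hnt2 : (n:ℝ) * t^2 ≤ 1/512 := by
    nlinarith [mul_nonneg (mul_nonneg (by linarith : (0:ℝ) ≤ (m:ℝ)) htpos.le) htpos.le]
  have ht62 : t^6 ≤ t^2 := pow_le_pow_of_le_one htpos.le ht1 (by norm_num)
  have ht102 : t^10 ≤ t^2 := pow_le_pow_of_le_one htpos.le ht1 (by norm_num)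
  have hRHS : (m:ℝ) * t ^ 2 + 4 * (n:ℝ) * t ^ 6 + (m:ℝ) * t ^ 10 < 3/2 := by nlinarith
  -- uncovered vertices and chosen edges
  set U : Finset V := Finset.univ.filter (fun v => ∀ i : Fin 3, Sum.inl (v, i) ∉ 𝒱) with hU
  set EE : Finset G.edgeSet := Finset.univ.filter (fun e => Sum.inr e ∈ 𝒱) with hEE
  have he₀mem : e₀ ∈ EE := by simp [hEE, he₀]
  -- counting : EE.card ≤ U.card
  have hEEU : EE.card ≤ U.card := by
    have hsplit : (𝒱.filter (fun c => c.isLeft = true)).card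
        + (𝒱.filter (fun c => ¬ (c.isLeft = true))).card = n := by
      rw [Finset.card_filter_add_card_filter_not, hcard]
    have hEEeq : 𝒱.filter (fun c => ¬ (c.isLeft = true))
        = EE.map ⟨Sum.inr, Sum.inr_injective⟩ := by
      ext c
      cases c with
      | inl p => simp
      | inr e => simp [hEE]
    have hEEcard : EE.card = (𝒱.filter (fun c => ¬ (c.isLeft = true))).card := by
      rw [hEEeq, Finset.card_map]
    have hUsplit : U.card + (Finset.univ.filter
        (fun v => ¬ ∀ i : Fin 3, Sum.inl (v, i) ∉ 𝒱)).card = n := by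
      rw [hU, Finset.card_filter_add_card_filter_not, Finset.card_univ, hn]
    have hUcomp : (Finset.univ.filter (fun v => ¬ ∀ i : Fin 3, Sum.inl (v, i) ∉ 𝒱)).card
        ≤ (𝒱.filter (fun c => c.isLeft = true)).card := by
      apply Finset.card_le_card_of_injOn
        (fun v => Sum.inl (v, if h : ∃ i : Fin 3, Sum.inl (v,i) ∈ 𝒱 then h.choose else 0))
      · intro v hv
        simp only [Finset.mem_coe, Finset.mem_filter, Finset.mem_univ, true_and, not_forall, not_not] at hv
        simp only [Finset.mem_coe]; rw [dif_pos hv]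
        simp only [Finset.mem_filter]
        exact ⟨hv.choose_spec, rfl⟩
      · intro v _ w _ hvw
        have h2 := Sum.inl.inj hvw
        exact congrArg Prod.fst h2
    omega
  -- a nonzero vector in the kernel of the constraint map
  set B : Matrix (↥EE) (↥U ⊕ Unit) ℝ := fun e j =>
    Sum.elim (fun u : ↥U => if (u : V) ∈ ((e : G.edgeSet) : Sym2 V) then (1:ℝ) else 0)
      (fun _ => 1) j with hB
  have hninj : ¬ Function.Injective B.mulVecLin := by
    intro hinj
    have hle := LinearMap.finrank_le_finrank_of_injective hinj
    rw [Module.finrank_fintype_fun_eq_card, Module.finrank_fintype_fun_eq_card,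
      Fintype.card_sum, Fintype.card_coe, Fintype.card_coe, Fintype.card_unit] at hle
    omega
  obtain ⟨y, z, hyz, hne⟩ := Function.not_injective_iff.mp hninj
  set y₀ : (↥U ⊕ Unit) → ℝ := y - z with hy₀def
  have hy₀ : B.mulVecLin y₀ = 0 := by rw [hy₀def, map_sub, hyz, sub_self]
  have hy₀ne : y₀ ≠ 0 := sub_ne_zero_of_ne hne
  have hcon : ∀ e : ↥EE,
      (∑ u : ↥U, (if (u : V) ∈ ((e : G.edgeSet) : Sym2 V) then (1:ℝ) else 0) * y₀ (Sum.inl u))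
        + y₀ (Sum.inr ()) = 0 := by
    intro e
    have h := congrFun hy₀ e
    rw [Matrix.mulVecLin_apply] at h
    simpa [Matrix.mulVecLin_apply, Matrix.mulVec, dotProduct, hB,
      Fintype.sum_sum_type] using h
  -- the orthogonal vector x
  set a : V → ℝ := fun v => if h : v ∈ U then y₀ (Sum.inl ⟨v, h⟩) else 0 with ha
  set c' : ℝ := y₀ (Sum.inr ()) with hc'
  set x : V ⊕ Fin 3 ⊕ Unit → ℝ :=
    Sum.elim a (Sum.elim (fun _ => 0) (fun _ => t * c')) with hx
  have ha_coe : ∀ u : ↥U, a (u : V) = y₀ (Sum.inl u) := by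
    intro u
    rw [ha]
    simp [u.2]
  have hsumV : ∀ e : G.edgeSet, (∑ v : V, (if v ∈ (e : Sym2 V) then a v else 0))
      = ∑ u : ↥U, (if (u : V) ∈ (e : Sym2 V) then (1:ℝ) else 0) * y₀ (Sum.inl u) := by
    intro e
    have h1 : (∑ v : V, (if v ∈ (e : Sym2 V) then a v else 0))
        = ∑ v ∈ U, (if v ∈ (e : Sym2 V) then a v else 0) := by
      symm
      apply Finset.sum_subset (Finset.subset_univ U)
      intro v _ hv
      simp [ha, hv]
    rw [h1, ← Finset.sum_coe_sort U]
    refine Finset.sum_congr rfl (fun u _ => ?_)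
    rw [ha_coe u, boole_mul]
  -- key dot products
  have hdotV : ∀ (w : V) (i : Fin 3),
      (∑ r, x r * MG G t r (Sum.inl (w, i))) = a w := by
    intro w i
    rw [Fintype.sum_sum_type]
    have h2 : ∑ r : Fin 3 ⊕ Unit, x (Sum.inr r) * MG G t (Sum.inr r) (Sum.inl (w,i)) = 0 := by
      rw [Fintype.sum_sum_type]
      simp [hx, MG]
    rw [h2, add_zero]
    simp [hx, MG, mul_ite, Finset.sum_ite_eq']
  have hdotE : ∀ e : ↥EE, (∑ r, x r * MG G t r (Sum.inr (e : G.edgeSet))) = 0 := by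
    intro e
    rw [Fintype.sum_sum_type]
    have h1 : ∑ v : V, x (Sum.inl v) * MG G t (Sum.inl v) (Sum.inr (e : G.edgeSet))
        = t^2 * (∑ u : ↥U, (if (u : V) ∈ ((e : G.edgeSet) : Sym2 V) then (1:ℝ) else 0)
            * y₀ (Sum.inl u)) := by
      rw [← hsumV, Finset.mul_sum]
      refine Finset.sum_congr rfl (fun v _ => ?_)
      show a v * (if v ∈ ((e : G.edgeSet) : Sym2 V) then t^2 else 0)
          = t^2 * (if v ∈ ((e : G.edgeSet) : Sym2 V) then a v else 0)
      split_ifs <;> ring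
    have h2 : ∑ r : Fin 3 ⊕ Unit, x (Sum.inr r) * MG G t (Sum.inr r) (Sum.inr (e : G.edgeSet))
        = t * c' * t := by
      rw [Fintype.sum_sum_type]
      simp [hx, MG]
    rw [h1, h2]
    have h3 := hcon e
    linear_combination t^2 * h3
  have hdot𝒱 : ∀ c ∈ 𝒱, (∑ r, x r * MG G t r c) = 0 := by
    intro c hc
    cases c with
    | inl p =>
      obtain ⟨w, i⟩ := p
      rw [hdotV w i]
      have hwU : w ∉ U := by
        intro hw
        rw [hU] at hw
        simp only [Finset.mem_filter, Finset.mem_univ, true_and] at hw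
        exact hw i hc
      simp [ha, hwU]
    | inr e =>
      exact hdotE ⟨e, by simp [hEE, hc]⟩
  -- abbreviate the residual matrix
  set Rm := MG G t - Matrix.of (fun r (c : 𝒱) => MG G t r c.val) * A with hRm
  have hdotR : ∀ c, (∑ r, x r * Rm r c) = ∑ r, x r * MG G t r c := by
    intro c
    have hswap : (∑ r, x r * ((Matrix.of (fun r (c : 𝒱) => MG G t r c.val) * A) r c)) = 0 := by
      simp only [Matrix.mul_apply, Matrix.of_apply, Finset.mul_sum]
      rw [Finset.sum_comm]
      refine Finset.sum_eq_zero (fun c' _ => ?_)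
      simp only [← mul_assoc, ← Finset.sum_mul]
      rw [hdot𝒱 c'.1 c'.2, zero_mul]
    simp only [hRm, Matrix.sub_apply, mul_sub, Finset.sum_sub_distrib]
    rw [hswap, sub_zero]
  -- quantities
  set X2 : ℝ := ∑ r, x r ^ 2 with hX2
  set A2 : ℝ := ∑ w ∈ U, a w ^ 2 with hA2
  set T : ℝ := ∑ c, ∑ r, Rm r c ^ 2 with hT
  have hA2nonneg : 0 ≤ A2 := Finset.sum_nonneg (fun w _ => sq_nonneg _)
  have hTnonneg : 0 ≤ T := Finset.sum_nonneg
    (fun c _ => Finset.sum_nonneg (fun r _ => sq_nonneg _))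
  have hX2nonneg : 0 ≤ X2 := Finset.sum_nonneg (fun r _ => sq_nonneg _)
  -- Cauchy–Schwarz on the columns of uncovered vertices
  have hCS : ∀ w ∈ U, ∀ i : Fin 3,
      a w ^ 2 ≤ X2 * (∑ r, Rm r (Sum.inl (w,i)) ^ 2) := by
    intro w hw i
    have h := Finset.sum_mul_sq_le_sq_mul_sq Finset.univ x (fun r => Rm r (Sum.inl (w,i)))
    have h2 : (∑ r, x r * Rm r (Sum.inl (w,i))) = a w := by
      rw [hdotR, hdotV]
    rw [hX2]
    rw [h2] at h
    exact h
  -- summing up : 3 * A2 ≤ X2 * T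
  have hsub : 3 * A2 ≤ X2 * T := by
    have hTsub : (∑ w ∈ U, ∑ i : Fin 3, (∑ r, Rm r (Sum.inl (w,i)) ^ 2)) ≤ T := by
      have e1 : (∑ w ∈ U, ∑ i : Fin 3, (∑ r, Rm r (Sum.inl (w,i)) ^ 2))
          = ∑ c ∈ (U ×ˢ (Finset.univ : Finset (Fin 3))).map ⟨Sum.inl, Sum.inl_injective⟩,
              ∑ r, Rm r c ^ 2 := by
        rw [Finset.sum_map, Finset.sum_product]
        rfl
      rw [hT, e1]
      apply Finset.sum_le_sum_of_subset_of_nonneg (Finset.subset_univ _)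
      intro c _ _
      exact Finset.sum_nonneg (fun r _ => sq_nonneg _)
    have hleft : (∑ w ∈ U, ∑ _i : Fin 3, a w ^ 2) = 3 * A2 := by
      rw [hA2, Finset.mul_sum]
      refine Finset.sum_congr rfl (fun w _ => ?_)
      simp [Finset.sum_const, Finset.card_univ]
    calc (3:ℝ) * A2 = ∑ w ∈ U, ∑ _i : Fin 3, a w ^ 2 := hleft.symm
      _ ≤ ∑ w ∈ U, ∑ i : Fin 3, X2 * (∑ r, Rm r (Sum.inl (w,i)) ^ 2) :=
          Finset.sum_le_sum (fun w hw => Finset.sum_le_sum (fun i _ => hCS w hw i))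
      _ = X2 * (∑ w ∈ U, ∑ i : Fin 3, (∑ r, Rm r (Sum.inl (w,i)) ^ 2)) := by
          simp [Finset.mul_sum]
      _ ≤ X2 * T := mul_le_mul_of_nonneg_left hTsub hX2nonneg
  -- bound X2 ≤ 2 * A2
  have hAV : (∑ v : V, a v ^ 2) = A2 := by
    rw [hA2]
    symm
    apply Finset.sum_subset (Finset.subset_univ U)
    intro v _ hv
    simp [ha, hv]
  have hAU : (∑ u : ↥U, y₀ (Sum.inl u) ^ 2) = A2 := by
    rw [hA2, ← Finset.sum_coe_sort U]
    exact Finset.sum_congr rfl (fun u _ => by rw [ha_coe u])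
  have hX2val : X2 = A2 + t^2 * c'^2 := by
    rw [hX2, Fintype.sum_sum_type, Fintype.sum_sum_type]
    simp only [hx, Sum.elim_inl, Sum.elim_inr]
    rw [hAV]
    simp
    ring
  have hc'eq : c' = -(∑ u : ↥U,
      (if (u : V) ∈ ((e₀ : G.edgeSet) : Sym2 V) then (1:ℝ) else 0) * y₀ (Sum.inl u)) := by
    have hcon0 := hcon ⟨e₀, he₀mem⟩
    rw [hc']
    linarith [hcon0]
  have hc'sq : c'^2 ≤ (n:ℝ) * A2 := by
    have hCS2 := Finset.sum_mul_sq_le_sq_mul_sq Finset.univ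
      (fun u : ↥U => if (u : V) ∈ ((e₀ : G.edgeSet) : Sym2 V) then (1:ℝ) else 0)
      (fun u : ↥U => y₀ (Sum.inl u))
    have hind : (∑ u : ↥U,
        (if (u : V) ∈ ((e₀ : G.edgeSet) : Sym2 V) then (1:ℝ) else 0) ^ 2) ≤ (n:ℝ) := by
      calc (∑ u : ↥U, (if (u : V) ∈ ((e₀ : G.edgeSet) : Sym2 V) then (1:ℝ) else 0) ^ 2)
          ≤ ∑ _u : ↥U, (1:ℝ) := by
            refine Finset.sum_le_sum (fun u _ => ?_)
            split_ifs <;> norm_num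
        _ = (U.card : ℝ) := by simp [Fintype.card_coe]
        _ ≤ (n:ℝ) := by
            have hcle := Finset.card_le_univ U
            rw [hn]
            exact_mod_cast hcle
    calc c'^2 = (∑ u : ↥U, (if (u : V) ∈ ((e₀ : G.edgeSet) : Sym2 V) then (1:ℝ) else 0)
          * y₀ (Sum.inl u))^2 := by rw [hc'eq, neg_sq]
      _ ≤ (∑ u : ↥U, (if (u : V) ∈ ((e₀ : G.edgeSet) : Sym2 V) then (1:ℝ) else 0) ^ 2)
          * (∑ u : ↥U, y₀ (Sum.inl u) ^ 2) := hCS2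
      _ ≤ (n:ℝ) * A2 := by
          rw [hAU]
          exact mul_le_mul_of_nonneg_right hind hA2nonneg
  have hnt : (n:ℝ) * t ≤ 1/16 := by nlinarith
  have htn1 : t^2 * (n:ℝ) ≤ 1 := by nlinarith
  have hX2le : X2 ≤ 2 * A2 := by
    have h1 : t^2 * c'^2 ≤ t^2 * ((n:ℝ) * A2) :=
      mul_le_mul_of_nonneg_left hc'sq (sq_nonneg t)
    have h2 : t^2 * ((n:ℝ) * A2) ≤ A2 := by nlinarith
    rw [hX2val]
    linarith
  -- A2 is positive
  have hA2pos : 0 < A2 := by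
    rcases lt_or_eq_of_le hA2nonneg with h | h
    · exact h
    have hA2z : A2 = 0 := h.symm
    have hallU : ∀ u : ↥U, y₀ (Sum.inl u) = 0 := by
      intro u
      have hz : (∑ u : ↥U, y₀ (Sum.inl u) ^ 2) = 0 := by rw [hAU, hA2z]
      have := (Finset.sum_eq_zero_iff_of_nonneg
        (fun u _ => sq_nonneg (y₀ (Sum.inl u)))).mp hz u (Finset.mem_univ u)
      exact (pow_eq_zero_iff two_ne_zero).mp this
    have hc0 : c' = 0 := by
      rw [hc'eq]
      simp [hallU]
    have hy0 : y₀ = 0 := by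
      funext j
      cases j with
      | inl u => exact hallU u
      | inr u =>
        cases u
        rw [← hc']
        exact hc0
    exact (hy₀ne hy0).elim
  -- conclude T ≥ 3/2
  have hT32 : (3:ℝ)/2 ≤ T := by
    nlinarith [hsub, hX2le, hA2pos, hTnonneg, mul_le_mul_of_nonneg_right hX2le hTnonneg]
  -- finish
  have hsum : (∑ i, ∑ j, Rm i j ^ 2) = T := by rw [hT]; exact Finset.sum_comm
  show Real.sqrt _ < frob Rm
  unfold frob
  apply Real.sqrt_lt_sqrt (by positivity)
  rw [hsum]
  linarith
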